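/- Let I : ℝ^d → ℝ be continuously differentiable with ∇I Lipschitz continuous with constant L, and let S, T_1, …, T_m : ℝ^d → ℝ^{d×d} satisfy ‖S(z)‖ ≤ c and ‖T_r(z)‖ ≤ c (operator norm) for all z ∈ ℝ^d. Let h, w_1, …, w_m ∈ ℝ and set ε := c(|h| + Σ_{r=1}^m |w_r|). If εL < 2 and x, y ∈ ℝ^d satisfy y = x + (h S((x+y)/2) + Σ_{r=1}^m w_r T_r((x+y)/2)) · ∫₀¹ ∇I(x + τ(y − x)) dτ, then |y − x| ≤ ε |∇I(x)| / (1 − εL/2). -/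

import Mathlib

open Matrix

set_option maxHeartbeats 1000000 in
set_option synthInstance.maxHeartbeats 400000 in
/-- A priori bound on one step of the implicit conservative method. If
`∇I` is `L`-Lipschitz, `‖S(z)‖, ‖T_r(z)‖ ≤ c₀`, `ε := c₀(|h| + Σ_r |w_r|)` satisfies
`εL < 2`, and `y = x + (h S((x+y)/2) + Σ_r w_r T_r((x+y)/2)) ∫₀¹ ∇I(x + τ(y − x)) dτ`,
then `|y − x| ≤ ε |∇I(x)| / (1 − εL/2)`. -/
theorem one_step_displacement_bound
    (d m : ℕ) (I : EuclideanSpace ℝ (Fin d) → ℝ) (hI : ContDiff ℝ 1 I)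
    (L : ℝ)
    (hLip : ∀ z₁ z₂ : EuclideanSpace ℝ (Fin d),
      ‖gradient I z₁ - gradient I z₂‖ ≤ L * ‖z₁ - z₂‖)
    (S : EuclideanSpace ℝ (Fin d) → Matrix (Fin d) (Fin d) ℝ)
    (T : Fin m → EuclideanSpace ℝ (Fin d) → Matrix (Fin d) (Fin d) ℝ)
    (c₀ : ℝ)
    (hSnorm : ∀ z, ‖Matrix.toEuclideanCLM (𝕜 := ℝ) (S z)‖ ≤ c₀)
    (hTnorm : ∀ r z, ‖Matrix.toEuclideanCLM (𝕜 := ℝ) (T r z)‖ ≤ c₀)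
    (h : ℝ) (w : Fin m → ℝ) (ε : ℝ)
    (hε : ε = c₀ * (|h| + ∑ r, |w r|))
    (hεL : ε * L < 2)
    (x y : EuclideanSpace ℝ (Fin d))
    (hstep : y = x + Matrix.toEuclideanCLM (𝕜 := ℝ)
        (h • S ((2:ℝ)⁻¹ • (x + y)) + ∑ r, w r • T r ((2:ℝ)⁻¹ • (x + y)))
        (∫ τ in (0:ℝ)..1, gradient I (x + τ • (y - x)))) :
    ‖y - x‖ ≤ ε * ‖gradient I x‖ / (1 - ε * L / 2) := by
  -- continuity of gradient
  have hGcont : Continuous (gradient I) := by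
    have hf : Continuous (fderiv ℝ I) := hI.continuous_fderiv one_ne_zero
    have : Continuous fun z => (InnerProductSpace.toDual ℝ
        (EuclideanSpace ℝ (Fin d))).symm (fderiv ℝ I z) :=
      (InnerProductSpace.toDual ℝ _).symm.continuous.comp hf
    exact this
  set z₀ := (2:ℝ)⁻¹ • (x + y) with hz₀
  set M := Matrix.toEuclideanCLM (𝕜 := ℝ)
      (h • S z₀ + ∑ r, w r • T r z₀) with hMdef
  have hε0 : 0 ≤ ε := by
    have h1 : (0:ℝ) ≤ c₀ := le_trans (norm_nonneg _) (hSnorm 0)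
    have h2 : (0:ℝ) ≤ |h| + ∑ r, |w r| := by positivity
    rw [hε]; positivity
  have hden : 0 < 1 - ε * L / 2 := by linarith
  have hM : ‖M‖ ≤ ε := by
    rw [hMdef, map_add, _root_.map_smul, map_sum]
    calc ‖h • (Matrix.toEuclideanCLM (𝕜 := ℝ) (S z₀)) +
          ∑ r, Matrix.toEuclideanCLM (𝕜 := ℝ) (w r • T r z₀)‖
        ≤ ‖h • (Matrix.toEuclideanCLM (𝕜 := ℝ) (S z₀))‖ +
          ∑ r, ‖Matrix.toEuclideanCLM (𝕜 := ℝ) (w r • T r z₀)‖ :=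
          (norm_add_le _ _).trans (add_le_add le_rfl (norm_sum_le _ _))
      _ ≤ |h| * c₀ + ∑ r, |w r| * c₀ := by
          refine add_le_add ?_ (Finset.sum_le_sum fun r _ => ?_)
          · rw [norm_smul h (Matrix.toEuclideanCLM (𝕜 := ℝ) (S z₀)),
              Real.norm_eq_abs]
            exact mul_le_mul_of_nonneg_left (hSnorm _) (abs_nonneg _)
          · rw [_root_.map_smul,
              norm_smul (w r) (Matrix.toEuclideanCLM (𝕜 := ℝ) (T r z₀)),
              Real.norm_eq_abs]
            exact mul_le_mul_of_nonneg_left (hTnorm _ _) (abs_nonneg _)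
      _ = ε := by rw [hε, ← Finset.sum_mul]; ring
  -- the path and its gradient values
  have hpath : Continuous fun τ : ℝ => gradient I (x + τ • (y - x)) :=
    hGcont.comp (continuous_const.add (continuous_id.smul continuous_const))
  have hint : IntervalIntegrable (fun τ : ℝ => gradient I (x + τ • (y - x)))
      MeasureTheory.volume 0 1 := hpath.intervalIntegrable _ _
  set g := ∫ τ in (0:ℝ)..1, gradient I (x + τ • (y - x)) with hg
  have hgsub : g - gradient I x
      = ∫ τ in (0:ℝ)..1, (gradient I (x + τ • (y - x)) - gradient I x) := by
    rw [intervalIntegral.integral_sub hint (intervalIntegrable_const)]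
    simp
    exact hg
  have hgbound : ‖g - gradient I x‖ ≤ L * ‖y - x‖ / 2 := by
    rw [hgsub]
    have hle : ‖∫ τ in (0:ℝ)..1, (gradient I (x + τ • (y - x)) - gradient I x)‖
        ≤ ∫ τ in (0:ℝ)..1, ‖gradient I (x + τ • (y - x)) - gradient I x‖ :=
      intervalIntegral.norm_integral_le_integral_norm (by norm_num)
    refine hle.trans ?_
    have hmono : (∫ τ in (0:ℝ)..1, ‖gradient I (x + τ • (y - x)) - gradient I x‖)
        ≤ ∫ τ in (0:ℝ)..1, L * (τ * ‖y - x‖) := by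
      apply intervalIntegral.integral_mono_on (by norm_num)
      · exact ((hpath.sub continuous_const).norm).intervalIntegrable _ _
      · exact (continuous_const.mul (continuous_id.mul
          continuous_const)).intervalIntegrable _ _
      · intro τ hτ
        have := hLip (x + τ • (y - x)) x
        have hxy : ‖x + τ • (y - x) - x‖ = τ * ‖y - x‖ := by
          rw [add_sub_cancel_left, norm_smul, Real.norm_eq_abs,
            abs_of_nonneg hτ.1]
        rw [hxy] at this
        linarith [this]
    refine hmono.trans ?_
    have heq : (∫ τ in (0:ℝ)..1, L * (τ * ‖y - x‖))
        = L * ‖y - x‖ * ∫ τ in (0:ℝ)..1, τ := by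
      rw [← intervalIntegral.integral_const_mul]
      congr 1; ext τ; ring
    rw [heq, integral_id]
    exact le_of_eq (by ring)
  -- main estimate
  have hyx : y - x = M g := by rw [hstep]; abel
  have hgnorm : ‖g‖ ≤ ‖gradient I x‖ + L * ‖y - x‖ / 2 := by
    calc ‖g‖ = ‖gradient I x + (g - gradient I x)‖ := by rw [add_sub_cancel]
      _ ≤ ‖gradient I x‖ + ‖g - gradient I x‖ := norm_add_le _ _
      _ ≤ _ := by linarith
  have hkey : ‖y - x‖ ≤ ε * (‖gradient I x‖ + L * ‖y - x‖ / 2) := by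
    calc ‖y - x‖ = ‖M g‖ := by rw [hyx]
      _ ≤ ‖M‖ * ‖g‖ := M.le_opNorm g
      _ ≤ ε * ‖g‖ := mul_le_mul_of_nonneg_right hM (norm_nonneg g)
      _ ≤ _ := mul_le_mul_of_nonneg_left hgnorm hε0
  rw [le_div_iff₀ hden]
  nlinarith [hkey, norm_nonneg (y - x)]
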